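/- Let r(γ,ρ) = (γ + ρ(1−γ)) / √(γ² + (1−γ)² + 2ργ(1−γ)). For every fixed γ ∈ (0,1/2), the map ρ ↦ r(γ,ρ) is strictly increasing on (−1,1). -/

import Mathlib

open Set

/-- The correlation `r(γ,ρ)` between the principal's interest and the
agent's prioritization variable. -/
noncomputable def r (γ ρ : ℝ) : ℝ :=
  (γ + ρ * (1 - γ)) / Real.sqrt (γ ^ 2 + (1 - γ) ^ 2 + 2 * ρ * γ * (1 - γ))

/-- For fixed weight `γ ∈ (0,1/2)`, the correlation `r(γ,ρ)` is strictly
increasing in the alignment `ρ` on `(-1,1)`. -/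
theorem stmt4 (γ : ℝ) (hγ : γ ∈ Ioo (0 : ℝ) (1 / 2)) :
    StrictMonoOn (fun ρ => r γ ρ) (Ioo (-1 : ℝ) 1) := by
  obtain ⟨h0, h2⟩ := hγ
  have hb : (0 : ℝ) < 1 - γ := by linarith
  have hab : γ < 1 - γ := by linarith
  -- positivity of the inner expression for ρ > -1
  have hD : ∀ ρ : ℝ, -1 < ρ → 0 < γ ^ 2 + (1 - γ) ^ 2 + 2 * ρ * γ * (1 - γ) := by
    intro ρ hρ
    nlinarith [sq_nonneg (γ - (1 - γ)), mul_pos h0 hb]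
  -- derivative of the inner expression
  have hinner : ∀ ρ : ℝ, HasDerivAt (fun ρ => γ ^ 2 + (1 - γ) ^ 2 + 2 * ρ * γ * (1 - γ))
      (2 * γ * (1 - γ)) ρ := by
    intro ρ
    have h : (fun ρ : ℝ => γ ^ 2 + (1 - γ) ^ 2 + 2 * ρ * γ * (1 - γ))
        = fun ρ : ℝ => (2 * γ * (1 - γ)) * ρ + (γ ^ 2 + (1 - γ) ^ 2) := by
      funext ρ; ring
    rw [h]
    simpa using ((hasDerivAt_id ρ).const_mul (2 * γ * (1 - γ))).add_const (γ ^ 2 + (1 - γ) ^ 2)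
  have key : ∀ ρ ∈ Ioo (-1 : ℝ) 1, HasDerivAt (fun ρ => r γ ρ)
      (((1 - γ) * Real.sqrt (γ ^ 2 + (1 - γ) ^ 2 + 2 * ρ * γ * (1 - γ))
        - (γ + ρ * (1 - γ)) * (1 / (2 * Real.sqrt (γ ^ 2 + (1 - γ) ^ 2 + 2 * ρ * γ * (1 - γ)))
          * (2 * γ * (1 - γ))))
        / Real.sqrt (γ ^ 2 + (1 - γ) ^ 2 + 2 * ρ * γ * (1 - γ)) ^ 2) ρ := by
    intro ρ hρ
    have hDρ := hD ρ hρ.1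
    have hs : 0 < Real.sqrt (γ ^ 2 + (1 - γ) ^ 2 + 2 * ρ * γ * (1 - γ)) := Real.sqrt_pos.2 hDρ
    have hnum : HasDerivAt (fun ρ : ℝ => γ + ρ * (1 - γ)) (1 - γ) ρ := by
      simpa using ((hasDerivAt_id ρ).mul_const (1 - γ)).const_add γ
    have hsq : HasDerivAt (fun ρ => Real.sqrt (γ ^ 2 + (1 - γ) ^ 2 + 2 * ρ * γ * (1 - γ)))
        (1 / (2 * Real.sqrt (γ ^ 2 + (1 - γ) ^ 2 + 2 * ρ * γ * (1 - γ))) * (2 * γ * (1 - γ))) ρ :=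
      (Real.hasDerivAt_sqrt hDρ.ne').comp ρ (hinner ρ)
    exact hnum.div hsq hs.ne'
  -- the derivative is positive
  have hpos : ∀ ρ ∈ Ioo (-1 : ℝ) 1,
      0 < ((1 - γ) * Real.sqrt (γ ^ 2 + (1 - γ) ^ 2 + 2 * ρ * γ * (1 - γ))
        - (γ + ρ * (1 - γ)) * (1 / (2 * Real.sqrt (γ ^ 2 + (1 - γ) ^ 2 + 2 * ρ * γ * (1 - γ)))
          * (2 * γ * (1 - γ))))
        / Real.sqrt (γ ^ 2 + (1 - γ) ^ 2 + 2 * ρ * γ * (1 - γ)) ^ 2 := by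
    intro ρ hρ
    have hDρ := hD ρ hρ.1
    have hs : 0 < Real.sqrt (γ ^ 2 + (1 - γ) ^ 2 + 2 * ρ * γ * (1 - γ)) := Real.sqrt_pos.2 hDρ
    have hs2 : Real.sqrt (γ ^ 2 + (1 - γ) ^ 2 + 2 * ρ * γ * (1 - γ)) ^ 2
        = γ ^ 2 + (1 - γ) ^ 2 + 2 * ρ * γ * (1 - γ) := Real.sq_sqrt hDρ.le
    apply div_pos _ (pow_pos hs 2)
    have h1 : (1 : ℝ) / (2 * Real.sqrt (γ ^ 2 + (1 - γ) ^ 2 + 2 * ρ * γ * (1 - γ)))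
        * (2 * γ * (1 - γ))
        = γ * (1 - γ) / Real.sqrt (γ ^ 2 + (1 - γ) ^ 2 + 2 * ρ * γ * (1 - γ)) := by
      field_simp
    rw [h1, sub_pos, mul_div_assoc', div_lt_iff₀ hs]
    nlinarith [hs, hs2, mul_pos h0 hb, hρ.1, hρ.2, sq_nonneg (1 - γ)]
  exact strictMonoOn_of_hasDerivWithinAt_pos (convex_Ioo _ _)
    (fun ρ hρ => ((key ρ hρ).continuousAt.continuousWithinAt))
    (fun ρ hρ => by
      rw [interior_Ioo] at hρ
      exact ((key ρ hρ).hasDerivWithinAt))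
    (fun ρ hρ => by rw [interior_Ioo] at hρ; exact hpos ρ hρ)
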